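/- Let V be a real inner product space of dimension ≥ 4 with orthogonal almost complex structure J, and R a curvature-like tensor (satisfying the symmetries of a Riemann curvature tensor). Fix θ ∈ (0, π/2) and c ∈ ℝ. If for all unit vectors x,y with g(x,y) = g(x,Jy) = 0 one has R(Jx, x cos θ + y sin θ, x cos θ + y sin θ, Jx) = c, then R(x, Jx, Jx, y) = 0 for all such x,y. -/
import Mathlib


open RealInnerProductSpace

theorem schur_step_eq2
    {V : Type*} [NormedAddCommGroup V] [InnerProductSpace ℝ V] [FiniteDimensional ℝ V]
    (hdim : 4 ≤ Module.finrank ℝ V)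
    (J : V →ₗ[ℝ] V) (hJ2 : ∀ x, J (J x) = -x) (hJg : ∀ x y, ⟪J x, J y⟫ = ⟪x, y⟫)
    (R : V →ₗ[ℝ] V →ₗ[ℝ] V →ₗ[ℝ] V →ₗ[ℝ] ℝ)
    (hR1 : ∀ x y z u, R x y z u = - R y x z u)
    (hR2 : ∀ x y z u, R x y z u = - R x y u z)
    (hR3 : ∀ x y z u, R x y z u = R z u x y)
    (hBianchi : ∀ x y z u, R x y z u + R y z x u + R z x y u = 0)
    (θ : ℝ) (hθ : θ ∈ Set.Ioo 0 (Real.pi / 2)) (c : ℝ)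
    (hc : ∀ x y : V, ‖x‖ = 1 → ‖y‖ = 1 → ⟪x, y⟫ = 0 → ⟪x, J y⟫ = 0 →
      R (J x) (Real.cos θ • x + Real.sin θ • y) (Real.cos θ • x + Real.sin θ • y) (J x) = c) :
    ∀ x y : V, ‖x‖ = 1 → ‖y‖ = 1 → ⟪x, y⟫ = 0 → ⟪x, J y⟫ = 0 →
      R x (J x) (J x) y = 0 := by
  intro x y hx hy hxy hxJy
  have h1 := hc x y hx hy hxy hxJy
  have h2 := hc x (-y) hx (by simpa using hy) (by simp [hxy]) (by simp [hxJy])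
  simp only [map_add, map_smul, map_neg, LinearMap.add_apply, LinearMap.smul_apply,
    LinearMap.neg_apply, smul_eq_mul] at h1 h2
  have e1 : R (J x) x y (J x) = R x (J x) (J x) y := by
    rw [hR1, hR2, neg_neg]
  have e2 : R (J x) y x (J x) = R x (J x) (J x) y := hR3 _ _ _ _
  rw [e1, e2] at h1 h2
  have hcos : 0 < Real.cos θ := Real.cos_pos_of_mem_Ioo ⟨by linarith [hθ.1, Real.pi_pos], hθ.2⟩
  have hsin : 0 < Real.sin θ := Real.sin_pos_of_pos_of_lt_pi hθ.1 (by linarith [hθ.2, Real.pi_pos])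
  have key : Real.cos θ * Real.sin θ * R x (J x) (J x) y = 0 := by linarith
  have hne : Real.cos θ * Real.sin θ ≠ 0 := by positivity
  exact (mul_eq_zero.mp key).resolve_left hne
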